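/- Let (J,γ) be a nilpotent metrised real Jordan algebra of dimension n. Then there exists a basis e₁,…,e_n of J putting (J,γ) in semi-canonical form, and moreover the basis and an integer m ≥ 0 with 2m ≤ n can be chosen so that the partition S equals {{1,n},{2,n-1},…,{m,n+1-m},{m+1},…,{n-m}} (i.e., γ(e_k,e_{n+1-k}) = 1 and γ(e_k,e_k) = γ(e_{n+1-k},e_{n+1-k}) = 0 for 1 ≤ k ≤ m, γ(e_i,e_i) = ±1 for m+1 ≤ i ≤ n-m, and all other entries of γ in this basis vanish) and so that γ(e_k,e_k) ≥ γ(e_l,e_l) for all m+1 ≤ k < l ≤ n-m. -/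

import Mathlib

open Module

def cas {A : Type*} [AddCommGroup A] [Module ℝ A]
    (mul : A →ₗ[ℝ] A →ₗ[ℝ] A) : ℕ → Submodule ℝ A
  | 0 => ⊥
  | (k + 1) =>
    { carrier := {x | ∀ y, mul x y ∈ cas mul k}
      add_mem' := fun {a b} ha hb y => by
        simpa [map_add, LinearMap.add_apply] using (cas mul k).add_mem (ha y) (hb y)
      zero_mem' := fun y => by simp
      smul_mem' := fun c a ha y => by
        simpa [map_smul, LinearMap.smul_apply] using (cas mul k).smul_mem c (ha y) }

open Submodule


universe u v

section
variable {V : Type u} [AddCommGroup V] [Module ℝ V] {ι : Type v}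

/-- joint central ascending series for a family of operators -/
def jcas (S : ι → Module.End ℝ V) : ℕ → Submodule ℝ V
  | 0 => ⊥
  | (k + 1) =>
    { carrier := {x | ∀ i, S i x ∈ jcas S k}
      add_mem' := fun {a b} ha hb i => by
        simpa [map_add] using (jcas S k).add_mem (ha i) (hb i)
      zero_mem' := fun i => by simp
      smul_mem' := fun c a ha i => by
        simpa [map_smul] using (jcas S k).smul_mem c (ha i) }

lemma jcas_succ_mem {S : ι → Module.End ℝ V} {k : ℕ} {x : V} :
    x ∈ jcas S (k+1) ↔ ∀ i, S i x ∈ jcas S k := Iff.rfl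

/-- if the joint annihilator is trivial, the whole series is trivial -/
lemma jcas_bot {S : ι → Module.End ℝ V}
    (h : ∀ x : V, (∀ i, S i x = 0) → x = 0) : ∀ k, jcas S k = ⊥ := by
  intro k
  induction k with
  | zero => rfl
  | succ k ih =>
    rw [eq_bot_iff]
    intro x hx
    -- hx : ∀ i, S i x ∈ jcas S k = ⊥
    have : ∀ i, S i x = 0 := by
      intro i
      have := hx i
      rw [ih] at this
      simpa using this
    simpa using h x this

lemma exists_ann {S : ι → Module.End ℝ V} (hnil : ∃ N, jcas S N = ⊤)
    (hV : ∃ v : V, v ≠ 0) : ∃ x : V, x ≠ 0 ∧ ∀ i, S i x = 0 := by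
  by_contra h
  push_neg at h
  have h' : ∀ x : V, (∀ i, S i x = 0) → x = 0 := by
    intro x hx
    by_contra hx0
    obtain ⟨i, hi⟩ := h x hx0
    exact hi (hx i)
  obtain ⟨N, hN⟩ := hnil
  rw [jcas_bot h' N] at hN
  obtain ⟨v, hv⟩ := hV
  exact hv (by simpa using (hN ▸ Submodule.mem_top : v ∈ (⊥ : Submodule ℝ V)))

/-- restriction to an invariant submodule preserves membership in the series -/
lemma jcas_restrict {S : ι → Module.End ℝ V} {B : Submodule ℝ V}
    (hB : ∀ i, ∀ u ∈ B, S i u ∈ B) :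
    ∀ k, ∀ u : B, (u : V) ∈ jcas S k →
      u ∈ jcas (fun i => (S i).restrict (hB i)) k := by
  intro k
  induction k with
  | zero => intro u hu; simpa [jcas] using Subtype.ext (by simpa [jcas] using hu)
  | succ k ih =>
    intro u hu i
    exact ih _ (hu i)

/-- descending to a quotient preserves membership in the series -/
lemma jcas_quot {S : ι → Module.End ℝ V} {X : Submodule ℝ V}
    (hX : ∀ i, X ≤ X.comap (S i)) :
    ∀ k, ∀ u : V, u ∈ jcas S k →
      Submodule.Quotient.mk u ∈ jcas (fun i => X.mapQ X (S i) (hX i)) k := by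
  intro k
  induction k with
  | zero =>
    intro u hu
    have : u ∈ X := by
      have : u = 0 := by simpa [jcas] using hu
      simp [this]
    simpa [jcas, Submodule.Quotient.mk_eq_zero] using this
  | succ k ih =>
    intro u hu i
    have := ih _ (hu i)
    simpa [Submodule.mapQ_apply] using this

/-- membership in a span can be checked after passing to a quotient, provided the span
contains the kernel -/
lemma mem_span_of_quot {B : Type*} [AddCommGroup B] [Module ℝ B]
    (X : Submodule ℝ B) (s : Set B) (hX : X ≤ span ℝ s) (u : B)
    (hu : X.mkQ u ∈ span ℝ (X.mkQ '' s)) : u ∈ span ℝ s := by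
  rw [← Submodule.map_span] at hu
  have hu' : u ∈ comap X.mkQ (map X.mkQ (span ℝ s)) := hu
  rwa [Submodule.comap_map_eq, Submodule.ker_mkQ, sup_eq_left.mpr hX] at hu'

end

def Pat (n m : ℕ) (g : ℕ → ℕ → ℝ) : Prop :=
  (∀ i j, i < m → i + j + 1 = n → g i j = 1 ∧ g i i = 0 ∧ g j j = 0) ∧
  (∀ i, m ≤ i → i + m < n → g i i = 1 ∨ g i i = -1) ∧
  (∀ i j, i < n → j < n → ¬(i + j + 1 = n ∧ (i < m ∨ j < m)) →
    ¬(i = j ∧ m ≤ i ∧ i + m < n) → g i j = 0) ∧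
  (∀ i j, m ≤ i → i < j → j + m < n → g i i ≥ g j j)

section
variable {V : Type u} [AddCommGroup V] [Module ℝ V] {ι : Type v}

lemma caseA (S : ι → Module.End ℝ V) (γ : V →ₗ[ℝ] V →ₗ[ℝ] ℝ)
    (n m' p : ℕ) (hn : 1 ≤ n) (hm' : 2 * m' ≤ n - 1)
    (x : V) (ε : ℝ) (hxx : γ x x = ε)
    (hps : (ε = 1 ∧ p = m') ∨ (ε = -1 ∧ p = n - 1 - m'))
    (hSx : ∀ i, S i x = 0)
    (f : ℕ → V)
    (hxf : ∀ j, j < n - 1 → γ x (f j) = 0) (hfx : ∀ j, j < n - 1 → γ (f j) x = 0)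
    (htri : ∀ i k, k < n - 1 → S i (f k) ∈ span ℝ (f '' {j | j < k}))
    (hpat : Pat (n-1) m' (fun i j => γ (f i) (f j))) :
    ∃ e : ℕ → V,
      (insert x (f '' {j | j < n - 1}) ⊆ e '' {k | k < n}) ∧
      (∀ i k, k < n → S i (e k) ∈ span ℝ (e '' {j | j < k})) ∧
      Pat n m' (fun i j => γ (e i) (e j)) := by
  obtain ⟨hpair, hmid, hzero, hsort⟩ := hpat
  have hpm : m' ≤ p := by rcases hps with ⟨_, rfl⟩ | ⟨_, rfl⟩ <;> omega
  have hpM : p + m' ≤ n - 1 := by rcases hps with ⟨_, rfl⟩ | ⟨_, rfl⟩ <;> omega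
  have hpn : p < n := by omega
  set e : ℕ → V := fun k => if k < p then f k else if k = p then x else f (k - 1) with he
  have elt : ∀ k, k < p → e k = f k := fun k hk => by simp [he, hk]
  have ep : e p = x := by simp [he]
  have egt : ∀ k, p < k → e k = f (k - 1) := by
    intro k hk
    have h1 : ¬ k < p := by omega
    have h2 : ¬ k = p := by omega
    simp [he, h1, h2]
  have hfe : ∀ j, j < n - 1 → (j < p ∧ e j = f j) ∨ (p ≤ j ∧ e (j+1) = f j) := by
    intro j hj
    rcases lt_or_ge j p with h | h
    · exact Or.inl ⟨h, elt j h⟩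
    · refine Or.inr ⟨h, ?_⟩
      rw [egt (j+1) (by omega)]
      norm_num
  have emid : ∀ i, m' ≤ i → i + m' < n → γ (e i) (e i) = 1 ∨ γ (e i) (e i) = -1 := by
    intro i hi him
    rcases lt_trichotomy i p with h | h | h
    · rw [elt i h]; exact hmid i hi (by omega)
    · rw [h, ep, hxx]; rcases hps with ⟨h1, _⟩ | ⟨h1, _⟩ <;> [exact Or.inl h1; exact Or.inr h1]
    · rw [egt i h]; exact hmid (i-1) (by omega) (by omega)
  refine ⟨e, ?_, ?_, ?_, emid, ?_, ?_⟩
  · -- range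
    intro v hv
    simp only [Set.mem_insert_iff, Set.mem_image, Set.mem_setOf_eq] at hv ⊢
    rcases hv with rfl | ⟨j, hj, rfl⟩
    · exact ⟨p, show p < n by omega, ep⟩
    · rcases hfe j hj with ⟨h, hej⟩ | ⟨h, hej⟩
      · exact ⟨j, show j < n by omega, hej⟩
      · exact ⟨j+1, show j + 1 < n by omega, hej⟩
  · -- triangularity
    intro i k hk
    rcases lt_trichotomy k p with h | h | h
    · rw [elt k h]
      refine Submodule.span_mono ?_ (htri i k (by omega))
      rintro v ⟨j, hj, rfl⟩
      have hj' : j < k := hj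
      exact ⟨j, show j < k by omega, elt j (by omega)⟩
    · rw [h, ep]
      simpa [hSx i] using Submodule.zero_mem _
    · rw [egt k h]
      refine Submodule.span_mono ?_ (htri i (k-1) (by omega))
      rintro v ⟨j, hj, rfl⟩
      have hj' : j < k - 1 := hj
      rcases hfe j (by omega) with ⟨h', hej⟩ | ⟨h', hej⟩
      · exact ⟨j, show j < k by omega, hej⟩
      · exact ⟨j+1, show j + 1 < k by omega, hej⟩
  · -- pairs
    intro i j hi hij
    have h1 : i < p := by omega
    have h2 : p < j := by omega
    simp only [elt i h1, egt j h2]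
    exact hpair i (j-1) hi (by omega)
  · -- zeros
    intro i j hi hj hexc1 hexc2
    simp only []
    rcases lt_trichotomy i p with hip | hip | hip <;> rcases lt_trichotomy j p with hjp | hjp | hjp
    · rw [elt i hip, elt j hjp]
      refine hzero i j (by omega) (by omega) ?_ ?_
      · rintro ⟨hs, hc⟩
        rcases hc with hc | hc <;> omega
      · rintro ⟨rfl, hc1, hc2⟩
        exact hexc2 ⟨rfl, hc1, by omega⟩
    · rw [elt i hip, hjp, ep]
      exact hfx i (by omega)
    · rw [elt i hip, egt j hjp]
      refine hzero i (j-1) (by omega) (by omega) ?_ ?_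
      · rintro ⟨hs, hc⟩
        exact hexc1 ⟨by omega, by omega⟩
      · rintro ⟨hs, hc1, hc2⟩
        omega
    · rw [hip, ep, elt j hjp]
      exact hxf j (by omega)
    · exact absurd ⟨by omega, by omega, by omega⟩ hexc2
    · rw [hip, ep, egt j hjp]
      exact hxf (j-1) (by omega)
    · rw [egt i hip, elt j hjp]
      refine hzero (i-1) j (by omega) (by omega) ?_ ?_
      · rintro ⟨hs, hc⟩
        exact hexc1 ⟨by omega, by omega⟩
      · rintro ⟨hs, hc1, hc2⟩
        omega
    · rw [egt i hip, hjp, ep]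
      exact hfx (i-1) (by omega)
    · rw [egt i hip, egt j hjp]
      refine hzero (i-1) (j-1) (by omega) (by omega) ?_ ?_
      · rintro ⟨hs, hc⟩
        exact hexc1 ⟨by omega, by omega⟩
      · rintro ⟨hs, hc1, hc2⟩
        exact hexc2 ⟨by omega, by omega, by omega⟩
  · -- sorted
    intro i j hi hij hjm
    simp only []
    rcases lt_trichotomy i p with hip | hip | hip
    · rcases lt_trichotomy j p with hjp | hjp | hjp
      · rw [elt i hip, elt j hjp]
        exact hsort i j hi hij (by omega)
      · rw [elt i hip, hjp, ep, hxx]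
        rcases hps with ⟨h1, h2⟩ | ⟨h1, h2⟩
        · omega
        · have hm2 : γ (f i) (f i) = 1 ∨ γ (f i) (f i) = -1 := hmid i hi (by omega)
          rcases hm2 with h | h <;> rw [h, h1] <;> norm_num
      · rw [elt i hip, egt j hjp]
        exact hsort i (j-1) hi (by omega) (by omega)
    · rw [hip, ep, hxx]
      rcases hps with ⟨h1, h2⟩ | ⟨h1, h2⟩
      · rcases emid j (by omega) (by omega) with h | h <;> rw [h, h1] <;> norm_num
      · omega
    · rcases lt_trichotomy j p with hjp | hjp | hjp
      · omega
      · omega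
      · rw [egt i hip, egt j hjp]
        exact hsort (i-1) (j-1) (by omega) (by omega) (by omega)
lemma caseB (S : ι → Module.End ℝ V) (γ : V →ₗ[ℝ] V →ₗ[ℝ] ℝ)
    (n m' : ℕ) (hn : 2 ≤ n) (hm' : 2 * m' ≤ n - 2)
    (x y : V) (f : ℕ → V)
    (hxx : γ x x = 0) (hxy : γ x y = 1) (hyx : γ y x = 1) (hyy : γ y y = 0)
    (hxf : ∀ j, j < n - 2 → γ x (f j) = 0) (hfx : ∀ j, j < n - 2 → γ (f j) x = 0)
    (hyf : ∀ j, j < n - 2 → γ y (f j) = 0) (hfy : ∀ j, j < n - 2 → γ (f j) y = 0)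
    (hSx : ∀ i, S i x = 0)
    (hSy : ∀ i, S i y ∈ span ℝ (insert x (f '' {j | j < n - 2})))
    (htri : ∀ i k, k < n - 2 → S i (f k) ∈ span ℝ (insert x (f '' {j | j < k})))
    (hpat : Pat (n-2) m' (fun i j => γ (f i) (f j))) :
    ∃ e : ℕ → V,
      (insert x (insert y (f '' {j | j < n - 2})) ⊆ e '' {k | k < n}) ∧
      (∀ i k, k < n → S i (e k) ∈ span ℝ (e '' {j | j < k})) ∧
      Pat n (m' + 1) (fun i j => γ (e i) (e j)) := by
  obtain ⟨hpair, hmid, hzero, hsort⟩ := hpat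
  refine ⟨fun k => if k = 0 then x else if k = n - 1 then y else f (k - 1), ?_, ?_, ?_, ?_, ?_, ?_⟩
  · -- range
    intro v hv
    simp only [Set.mem_insert_iff, Set.mem_image, Set.mem_setOf_eq] at hv ⊢
    rcases hv with rfl | rfl | ⟨j, hj, rfl⟩
    · exact ⟨0, by omega, by simp⟩
    · exact ⟨n - 1, by omega, by simp; omega⟩
    · refine ⟨j + 1, by omega, ?_⟩
      have h1 : ¬(j + 1 = 0) := by omega
      have h2 : ¬(j + 1 = n - 1) := by omega
      simp [h1, h2]
  · -- triangularity
    intro i k hk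
    rcases eq_or_ne k 0 with rfl | hk0
    · simpa [hSx i] using Submodule.zero_mem _
    rcases eq_or_ne k (n-1) with rfl | hktop
    · have h0 : ¬(n - 1 = 0) := by omega
      simp only [h0, if_false, if_pos rfl]
      refine Submodule.span_mono ?_ (hSy i)
      intro v hv
      simp only [Set.mem_insert_iff, Set.mem_image, Set.mem_setOf_eq] at hv ⊢
      rcases hv with rfl | ⟨j, hj, rfl⟩
      · exact ⟨0, by omega, by simp⟩
      · refine ⟨j + 1, by omega, ?_⟩
        have h1 : ¬(j + 1 = 0) := by omega
        have h2 : ¬(j + 1 = n - 1) := by omega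
        simp [h1, h2]
    · simp only [hk0, if_false, hktop, if_false]
      refine Submodule.span_mono ?_ (htri i (k-1) (by omega))
      intro v hv
      simp only [Set.mem_insert_iff, Set.mem_image, Set.mem_setOf_eq] at hv ⊢
      rcases hv with rfl | ⟨j, hj, rfl⟩
      · exact ⟨0, by omega, by simp⟩
      · refine ⟨j + 1, by omega, ?_⟩
        have h1 : ¬(j + 1 = 0) := by omega
        have h2 : ¬(j + 1 = n - 1) := by omega
        simp [h1, h2]
  · -- pairs
    intro i j hi hij
    rcases eq_or_ne i 0 with rfl | hi0
    · have hj : j = n - 1 := by omega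
      subst hj
      have h0 : ¬(n - 1 = 0) := by omega
      simp [h0, hxx, hxy, hyy]
    · have hi1 : 1 ≤ i := by omega
      have him : i - 1 < m' := by omega
      have hjb : 1 ≤ j ∧ j < n - 1 ∧ i < n - 1 := by omega
      have hij' : (i-1) + (j-1) + 1 = n - 2 := by omega
      obtain ⟨h1, h2, h3⟩ := hpair (i-1) (j-1) him hij'
      have hine : i ≠ 0 := by omega
      have hine' : i ≠ n - 1 := by omega
      have hjne : j ≠ 0 := by omega
      have hjne' : j ≠ n - 1 := by omega
      simp only [hine, hine', hjne, hjne', if_false]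
      exact ⟨h1, h2, h3⟩
  · -- middle
    intro i hi him
    have h1 : i ≠ 0 := by omega
    have h2 : i ≠ n - 1 := by omega
    simp only [h1, h2, if_false]
    exact hmid (i-1) (by omega) (by omega)
  · -- zeros
    intro i j hi hj hexc1 hexc2
    rcases eq_or_ne i 0 with rfl | hi0 <;> rcases eq_or_ne j 0 with rfl | hj0
    · simp [hxx]
    · rcases eq_or_ne j (n-1) with rfl | hj1
      · exact absurd ⟨by omega, Or.inl (by omega)⟩ hexc1
      · simp only [if_pos rfl, hj0, hj1, if_false]
        exact hxf (j-1) (by omega)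
    · rcases eq_or_ne i (n-1) with rfl | hi1
      · exact absurd ⟨by omega, Or.inr (by omega)⟩ hexc1
      · simp only [if_pos rfl, hi0, hi1, if_false]
        exact hfx (i-1) (by omega)
    · rcases eq_or_ne i (n-1) with rfl | hi1 <;> rcases eq_or_ne j (n-1) with rfl | hj1
      · simp [hi0, hyy]
      · simp only [if_pos rfl, hi0, hj0, hj1, if_false, if_neg (by omega : ¬(n-1=0))]
        exact hyf (j-1) (by omega)
      · simp only [if_pos rfl, hi0, hj0, hi1, if_false, if_neg (by omega : ¬(n-1=0))]
        exact hfy (i-1) (by omega)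
      · simp only [hi0, hj0, hi1, hj1, if_false]
        refine hzero (i-1) (j-1) (by omega) (by omega) ?_ ?_
        · rintro ⟨hs, hc⟩
          exact hexc1 ⟨by omega, by omega⟩
        · rintro ⟨hs, hc1, hc2⟩
          exact hexc2 ⟨by omega, by omega, by omega⟩
  · -- sorted
    intro i j hi hij hjm
    have hi1 : i ≠ 0 := by omega
    have hi2 : i ≠ n - 1 := by omega
    have hj1 : j ≠ 0 := by omega
    have hj2 : j ≠ n - 1 := by omega
    simp only [hi1, hi2, hj1, hj2, if_false]
    exact hsort (i-1) (j-1) (by omega) (by omega) (by omega)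
lemma assemble (S : ι → Module.End ℝ V) (γ : V →ₗ[ℝ] V →ₗ[ℝ] ℝ)
    (n m : ℕ) (hdim : finrank ℝ V = n) (eN : ℕ → V)
    (hsp : ⊤ ≤ span ℝ (eN '' {k | k < n}))
    (htri : ∀ i k, k < n → S i (eN k) ∈ span ℝ (eN '' {j | j < k}))
    (hm : 2 * m ≤ n) (hpat : Pat n m (fun a b => γ (eN a) (eN b))) :
    ∃ (e : Basis (Fin n) ℝ V) (m : ℕ), 2 * m ≤ n ∧
      (∀ (i : ι) (k : Fin n), S i (e k) ∈ span ℝ (⇑e '' {j : Fin n | (j : ℕ) < (k : ℕ)})) ∧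
      (∀ i j : Fin n, (i : ℕ) < m → (i : ℕ) + (j : ℕ) + 1 = n →
        γ (e i) (e j) = 1 ∧ γ (e i) (e i) = 0 ∧ γ (e j) (e j) = 0) ∧
      (∀ i : Fin n, m ≤ (i : ℕ) → (i : ℕ) + m < n →
        γ (e i) (e i) = 1 ∨ γ (e i) (e i) = -1) ∧
      (∀ i j : Fin n,
        ¬((i : ℕ) + (j : ℕ) + 1 = n ∧ ((i : ℕ) < m ∨ (j : ℕ) < m)) →
        ¬(i = j ∧ m ≤ (i : ℕ) ∧ (i : ℕ) + m < n) →
        γ (e i) (e j) = 0) ∧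
      (∀ i j : Fin n, m ≤ (i : ℕ) → (i : ℕ) < (j : ℕ) → (j : ℕ) + m < n →
        γ (e i) (e i) ≥ γ (e j) (e j)) := by
  obtain ⟨hpair, hmid, hzero, hsort⟩ := hpat
  have hr : Set.range (fun k : Fin n => eN ↑k) = eN '' {k | k < n} := by
    ext v
    constructor
    · rintro ⟨k, rfl⟩; exact ⟨↑k, k.isLt, rfl⟩
    · rintro ⟨k, hk, rfl⟩; exact ⟨⟨k, hk⟩, rfl⟩
  have hcard : Fintype.card (Fin n) = finrank ℝ V := by simp [hdim]
  have hsp' : ⊤ ≤ span ℝ (Set.range (fun k : Fin n => eN ↑k)) := by rw [hr]; exact hsp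
  refine ⟨basisOfTopLeSpanOfCardEqFinrank (fun k : Fin n => eN ↑k) hsp' hcard, m, hm, ?_, ?_, ?_, ?_, ?_⟩ <;>
    rw [coe_basisOfTopLeSpanOfCardEqFinrank]
  · intro i k
    have himg : (fun k : Fin n => eN ↑k) '' {j : Fin n | (j : ℕ) < (k : ℕ)} = eN '' {j | j < (k : ℕ)} := by
      ext v
      constructor
      · rintro ⟨j, hj, rfl⟩; exact ⟨↑j, hj, rfl⟩
      · rintro ⟨j, hj, rfl⟩
        have hj' : j < (k : ℕ) := hj
        exact ⟨⟨j, by omega⟩, hj', rfl⟩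
    rw [himg]
    exact htri i ↑k k.isLt
  · intro i j h1 h2
    exact hpair ↑i ↑j h1 h2
  · intro i h1 h2
    exact hmid ↑i h1 h2
  · intro i j h1 h2
    refine hzero ↑i ↑j i.isLt j.isLt h1 ?_
    rintro ⟨hv, hc1, hc2⟩
    exact h2 ⟨Fin.ext hv, hc1, hc2⟩
  · intro i j h1 h2 h3
    exact hsort ↑i ↑j h1 h2 h3
section
variable {V : Type u} [AddCommGroup V] [Module ℝ V] {ι : Type v}

def Concl (S : ι → Module.End ℝ V) (γ : V →ₗ[ℝ] V →ₗ[ℝ] ℝ) (n : ℕ) : Prop :=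
  ∃ (e : Basis (Fin n) ℝ V) (m : ℕ), 2 * m ≤ n ∧
    (∀ (i : ι) (k : Fin n), S i (e k) ∈ span ℝ (⇑e '' {j : Fin n | (j : ℕ) < (k : ℕ)})) ∧
    (∀ i j : Fin n, (i : ℕ) < m → (i : ℕ) + (j : ℕ) + 1 = n →
      γ (e i) (e j) = 1 ∧ γ (e i) (e i) = 0 ∧ γ (e j) (e j) = 0) ∧
    (∀ i : Fin n, m ≤ (i : ℕ) → (i : ℕ) + m < n →
      γ (e i) (e i) = 1 ∨ γ (e i) (e i) = -1) ∧
    (∀ i j : Fin n,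
      ¬((i : ℕ) + (j : ℕ) + 1 = n ∧ ((i : ℕ) < m ∨ (j : ℕ) < m)) →
      ¬(i = j ∧ m ≤ (i : ℕ) ∧ (i : ℕ) + m < n) →
      γ (e i) (e j) = 0) ∧
    (∀ i j : Fin n, m ≤ (i : ℕ) → (i : ℕ) < (j : ℕ) → (j : ℕ) + m < n →
      γ (e i) (e i) ≥ γ (e j) (e j))

end

def MasterStmt (n : ℕ) : Prop :=
  ∀ {V : Type u} [AddCommGroup V] [Module ℝ V] [FiniteDimensional ℝ V]
    {ι : Type v} (S : ι → Module.End ℝ V) (γ : V →ₗ[ℝ] V →ₗ[ℝ] ℝ),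
    finrank ℝ V = n →
    (∀ u v, γ u v = γ v u) →
    (∀ u, (∀ v, γ u v = 0) → u = 0) →
    (∀ i u v, γ (S i u) v = γ u (S i v)) →
    (∃ N, jcas S N = ⊤) →
    Concl S γ n

section
variable {V : Type u} [AddCommGroup V] [Module ℝ V] {ι : Type v}

lemma driverA [FiniteDimensional ℝ V]
    (S : ι → Module.End ℝ V) (γ : V →ₗ[ℝ] V →ₗ[ℝ] ℝ) (n : ℕ) (hn : 1 ≤ n)
    (prev : MasterStmt.{u, v} (n - 1))
    (hdim : finrank ℝ V = n)
    (hsymm : ∀ u v, γ u v = γ v u)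
    (hnd : ∀ u, (∀ v, γ u v = 0) → u = 0)
    (hsa : ∀ i u v, γ (S i u) v = γ u (S i v))
    (hnil : ∃ N, jcas S N = ⊤)
    (x : V) (hx : x ≠ 0) (hSx : ∀ i, S i x = 0) (hc : γ x x ≠ 0) :
    Concl S γ n := by
  classical
  -- normalize x
  set c := γ x x with hcdef
  obtain ⟨ε, hε, x', hxε, hSx'⟩ :
      ∃ ε : ℝ, (ε = 1 ∨ ε = -1) ∧ ∃ x' : V, γ x' x' = ε ∧ ∀ i, S i x' = 0 := by
    have h0 : |c| > 0 := abs_pos.mpr hc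
    have hrr : Real.sqrt |c| * Real.sqrt |c| = |c| := Real.mul_self_sqrt (abs_nonneg c)
    have hrne : Real.sqrt |c| ≠ 0 := ne_of_gt (Real.sqrt_pos.mpr h0)
    refine ⟨c / |c|, ?_, (Real.sqrt |c|)⁻¹ • x, ?_, ?_⟩
    · rcases abs_cases c with ⟨h1, _⟩ | ⟨h1, _⟩
      · left; rw [h1]; field_simp
      · right; rw [h1]; field_simp
    · simp only [map_smul, LinearMap.smul_apply, smul_eq_mul]
      rw [← hcdef, ← hrr]
      field_simp
      rw [Real.sqrt_sq (Real.sqrt_nonneg _)]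
    · intro i; rw [map_smul, hSx i, smul_zero]
  have hεne : ε ≠ 0 := by rcases hε with h | h <;> rw [h] <;> norm_num
  set B := LinearMap.ker (γ x') with hBdef
  have hdimB : finrank ℝ B = n - 1 := by
    have hsurj : LinearMap.range (γ x') = ⊤ := by
      rw [LinearMap.range_eq_top]
      intro t
      refine ⟨(t/ε) • x', ?_⟩
      rw [map_smul, smul_eq_mul, hxε]
      field_simp
    have h2 := LinearMap.finrank_range_add_finrank_ker (γ x')
    rw [hsurj, finrank_top, Module.finrank_self, hdim, ← hBdef] at h2
    omega
  have hBi : ∀ i, ∀ u ∈ B, S i u ∈ B := by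
    intro i u hu
    have h1 : γ x' u = 0 := hu
    show γ x' (S i u) = 0
    rw [← hsa i x' u, hSx' i, map_zero, LinearMap.zero_apply]
  set Sb : ι → Module.End ℝ B := fun i => (S i).restrict (hBi i) with hSbdef
  set γb : ↥B →ₗ[ℝ] ↥B →ₗ[ℝ] ℝ := (γ.domRestrict B).compl₂ B.subtype with hγbdef
  have hγb : ∀ u v : B, γb u v = γ ↑u ↑v := fun u v => rfl
  have hSbc : ∀ i (u : B), (↑(Sb i u) : V) = S i ↑u := fun i u => rfl
  have hdec : ∀ w : V, w - (γ x' w / ε) • x' ∈ B := by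
    intro w
    show γ x' _ = 0
    rw [map_sub, map_smul, smul_eq_mul, hxε]
    field_simp
    ring
  -- hypotheses for the smaller statement
  have hsymm_b : ∀ u v : B, γb u v = γb v u := fun u v => hsymm ↑u ↑v
  have hnd_b : ∀ u : B, (∀ v, γb u v = 0) → u = 0 := by
    intro u hu
    have h0 : (u : V) = 0 := by
      apply hnd
      intro w
      have hb : γ (u : V) (w - (γ x' w / ε) • x') = 0 := hu ⟨_, hdec w⟩
      have hux : γ (u : V) x' = 0 := by rw [hsymm]; exact u.2
      have hcalc : γ (u : V) w
          = γ (u : V) (w - (γ x' w / ε) • x') + (γ x' w / ε) * γ (u : V) x' := by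
        rw [map_sub, map_smul, smul_eq_mul]; ring
      rw [hcalc, hb, hux]; ring
    exact Subtype.ext (by simpa using h0)
  have hsa_b : ∀ i (u v : B), γb (Sb i u) v = γb u (Sb i v) := fun i u v => hsa i ↑u ↑v
  have hnil_b : ∃ N, jcas Sb N = ⊤ := by
    obtain ⟨N, hN⟩ := hnil
    refine ⟨N, eq_top_iff.mpr ?_⟩
    intro u _
    exact jcas_restrict hBi N u (by rw [hN]; trivial)
  obtain ⟨fB, m', hm', htriB, hpairB, hmidB, hzeroB, hsortB⟩ :=
    prev Sb γb hdimB hsymm_b hnd_b hsa_b hnil_b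
  -- pass to an ℕ-indexed family in V
  set f : ℕ → V := fun j => if h : j < n - 1 then ↑(fB ⟨j, h⟩) else 0 with hfdef
  have hfval : ∀ j (h : j < n - 1), f j = ↑(fB ⟨j, h⟩) := by
    intro j h; rw [hfdef]; exact dif_pos h
  have hxf : ∀ j, j < n - 1 → γ x' (f j) = 0 := by
    intro j h; rw [hfval j h]; exact (fB ⟨j, h⟩).2
  have hfx : ∀ j, j < n - 1 → γ (f j) x' = 0 := by
    intro j h; rw [hsymm]; exact hxf j h
  have htriN : ∀ i k, k < n - 1 → S i (f k) ∈ span ℝ (f '' {j | j < k}) := by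
    intro i k hk
    rw [hfval k hk]
    have h1 := htriB i ⟨k, hk⟩
    have h2 : (↑(Sb i (fB ⟨k, hk⟩)) : V)
        ∈ Submodule.map B.subtype (span ℝ (⇑fB '' {j : Fin (n-1) | (j : ℕ) < k})) :=
      Submodule.mem_map_of_mem h1
    rw [Submodule.map_span] at h2
    rw [show S i ↑(fB ⟨k, hk⟩) = (↑(Sb i (fB ⟨k, hk⟩)) : V) from rfl]
    refine span_mono ?_ h2
    rintro w ⟨b, ⟨j, hj, rfl⟩, rfl⟩
    have hj' : (j : ℕ) < k := hj
    exact ⟨↑j, hj', by rw [hfval ↑j j.isLt, Fin.eta]; rfl⟩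
  have hpatf : Pat (n-1) m' (fun a b => γ (f a) (f b)) := by
    refine ⟨?_, ?_, ?_, ?_⟩
    · intro i j hi hij
      have hi' : i < n - 1 := by omega
      have hj' : j < n - 1 := by omega
      show γ (f i) (f j) = 1 ∧ γ (f i) (f i) = 0 ∧ γ (f j) (f j) = 0
      rw [hfval i hi', hfval j hj']
      exact hpairB ⟨i, hi'⟩ ⟨j, hj'⟩ hi hij
    · intro i hi him
      have hi' : i < n - 1 := by omega
      show γ (f i) (f i) = 1 ∨ γ (f i) (f i) = -1
      rw [hfval i hi']
      exact hmidB ⟨i, hi'⟩ hi him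
    · intro i j hi' hj' hexc1 hexc2
      show γ (f i) (f j) = 0
      rw [hfval i hi', hfval j hj']
      refine hzeroB ⟨i, hi'⟩ ⟨j, hj'⟩ hexc1 ?_
      rintro ⟨hv, h1, h2⟩
      exact hexc2 ⟨by simpa using congrArg Fin.val hv, h1, h2⟩
    · intro i j hi hij hjm
      have hi' : i < n - 1 := by omega
      have hj' : j < n - 1 := by omega
      show γ (f i) (f i) ≥ γ (f j) (f j)
      rw [hfval i hi', hfval j hj']
      exact hsortB ⟨i, hi'⟩ ⟨j, hj'⟩ hi hij hjm
  have hBspan : ∀ u ∈ B, u ∈ span ℝ (f '' {j | j < n - 1}) := by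
    intro u hu
    have h1 : (⟨u, hu⟩ : B) ∈ span ℝ (Set.range ⇑fB) := by rw [fB.span_eq]; trivial
    have h2 : u ∈ Submodule.map B.subtype (span ℝ (Set.range ⇑fB)) := ⟨⟨u, hu⟩, h1, rfl⟩
    rw [Submodule.map_span] at h2
    refine span_mono ?_ h2
    rintro w ⟨b, ⟨j, rfl⟩, rfl⟩
    exact ⟨↑j, j.isLt, by rw [hfval ↑j j.isLt, Fin.eta]; rfl⟩
  have hins : ⊤ ≤ span ℝ (insert x' (f '' {j | j < n - 1})) := by
    intro w _
    have hb := hBspan _ (hdec w)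
    have hx'mem : x' ∈ span ℝ (insert x' (f '' {j | j < n - 1})) :=
      subset_span (Set.mem_insert _ _)
    have hbmem : w - (γ x' w / ε) • x' ∈ span ℝ (insert x' (f '' {j | j < n - 1})) :=
      span_mono (Set.subset_insert _ _) hb
    have hfin := Submodule.add_mem _ (Submodule.smul_mem _ (γ x' w / ε) hx'mem) hbmem
    simpa using hfin
  rcases hε with hε1 | hε1
  · obtain ⟨eN, hrange, htriN', hpatN'⟩ :=
      caseA S γ n m' m' hn hm' x' ε hxε (Or.inl ⟨hε1, rfl⟩) hSx' f hxf hfx htriN hpatf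
    exact assemble S γ n m' hdim eN (le_trans hins (span_mono hrange)) htriN' (by omega) hpatN'
  · obtain ⟨eN, hrange, htriN', hpatN'⟩ :=
      caseA S γ n m' (n - 1 - m') hn hm' x' ε hxε (Or.inr ⟨hε1, rfl⟩) hSx' f hxf hfx htriN hpatf
    exact assemble S γ n m' hdim eN (le_trans hins (span_mono hrange)) htriN' (by omega) hpatN'

end
section
variable {V : Type u} [AddCommGroup V] [Module ℝ V] {ι : Type v}

set_option maxHeartbeats 1200000 in
lemma driverB [FiniteDimensional ℝ V]
    (S : ι → Module.End ℝ V) (γ : V →ₗ[ℝ] V →ₗ[ℝ] ℝ) (n : ℕ) (hn : 1 ≤ n)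
    (prev : MasterStmt.{u, v} (n - 2))
    (hdim : finrank ℝ V = n)
    (hsymm : ∀ u v, γ u v = γ v u)
    (hnd : ∀ u, (∀ v, γ u v = 0) → u = 0)
    (hsa : ∀ i u v, γ (S i u) v = γ u (S i v))
    (hnil : ∃ N, jcas S N = ⊤)
    (x : V) (hx : x ≠ 0) (hSx : ∀ i, S i x = 0) (hxx : γ x x = 0) :
    Concl S γ n := by
  classical
  -- choose the dual isotropic vector y
  have hex : ∃ w, γ x w ≠ 0 := by
    by_contra h; push_neg at h; exact hx (hnd x h)
  obtain ⟨w0, hw0⟩ := hex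
  obtain ⟨y₁, hxy₁⟩ : ∃ y₁, γ x y₁ = 1 :=
    ⟨(γ x w0)⁻¹ • w0, by rw [map_smul, smul_eq_mul]; field_simp⟩
  obtain ⟨y, hxy, hyy⟩ : ∃ y : V, γ x y = 1 ∧ γ y y = 0 := by
    have hy1x : γ y₁ x = 1 := by rw [hsymm]; exact hxy₁
    refine ⟨y₁ - (γ y₁ y₁ / 2) • x, ?_, ?_⟩
    · rw [map_sub, map_smul, smul_eq_mul, hxy₁, hxx]; ring
    · simp only [map_sub, map_smul, LinearMap.sub_apply, LinearMap.smul_apply, smul_eq_mul]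
      rw [hxx, hxy₁, hy1x]; ring
  have hyx : γ y x = 1 := by rw [hsymm]; exact hxy
  set B := LinearMap.ker (γ x) with hBdef
  have hxB : x ∈ B := by show γ x x = 0; exact hxx
  have hdimB : finrank ℝ B = n - 1 := by
    have hsurj : LinearMap.range (γ x) = ⊤ := by
      rw [LinearMap.range_eq_top]
      intro t
      refine ⟨t • y, ?_⟩
      rw [map_smul, smul_eq_mul, hxy, mul_one]
    have h2 := LinearMap.finrank_range_add_finrank_ker (γ x)
    rw [hsurj, finrank_top, Module.finrank_self, hdim, ← hBdef] at h2
    omega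
  have hn2 : 2 ≤ n := by
    have hB0 : finrank ℝ B ≠ 0 := by
      intro h0
      rw [Submodule.finrank_eq_zero] at h0
      rw [h0] at hxB
      exact hx (by simpa using hxB)
    omega
  have hBi : ∀ i, ∀ u ∈ B, S i u ∈ B := by
    intro i u hu
    have h1 : γ x u = 0 := hu
    show γ x (S i u) = 0
    rw [← hsa i x u, hSx i, map_zero, LinearMap.zero_apply]
  set Sb : ι → Module.End ℝ B := fun i => (S i).restrict (hBi i) with hSbdef
  set γb : ↥B →ₗ[ℝ] ↥B →ₗ[ℝ] ℝ := (γ.domRestrict B).compl₂ B.subtype with hγbdef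
  have hγb : ∀ u v : B, γb u v = γ ↑u ↑v := fun u v => rfl
  set xB : B := ⟨x, hxB⟩ with hxBdef
  have hxB0 : xB ≠ 0 := by
    intro h
    exact hx (by simpa [hxBdef] using congrArg Subtype.val h)
  set X : Submodule ℝ B := span ℝ {xB} with hXdef
  have hXle : ∀ s : Set B, xB ∈ s → X ≤ span ℝ s := by
    intro s hs
    rw [hXdef, span_le]
    exact Set.singleton_subset_iff.mpr (subset_span hs)
  have hSbx : ∀ i, Sb i xB = 0 := by
    intro i
    apply Subtype.ext
    show S i x = (0 : V)
    exact hSx i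
  have hXinv : ∀ i, X ≤ X.comap (Sb i) := by
    intro i
    rw [hXdef, span_le]
    intro b hb
    rw [Set.mem_singleton_iff] at hb
    subst hb
    show Sb i xB ∈ X
    rw [hSbx i]
    exact zero_mem X
  set Sq : ι → Module.End ℝ (B ⧸ X) := fun i => X.mapQ X (Sb i) (hXinv i) with hSqdef
  have hdimQ : finrank ℝ (B ⧸ X) = n - 2 := by
    have h1 := Submodule.finrank_quotient_add_finrank X
    have h2 : finrank ℝ X = 1 := by
      rw [hXdef]
      exact finrank_span_singleton hxB0
    rw [hdimB, h2] at h1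
    omega
  -- the quotient bilinear form
  have hker1 : ∀ u : B, X ≤ LinearMap.ker (γb u) := by
    intro u
    rw [hXdef, span_le]
    intro b hb
    rw [Set.mem_singleton_iff] at hb
    subst hb
    show γ (↑u : V) x = 0
    rw [hsymm]; exact u.2
  set F : ↥B →ₗ[ℝ] (B ⧸ X) →ₗ[ℝ] ℝ :=
    { toFun := fun u => X.liftQ (γb u) (hker1 u)
      map_add' := by
        intro u v
        refine Submodule.linearMap_qext X ?_
        ext w
        simp [Submodule.liftQ_apply, hγb, map_add]
      map_smul' := by
        intro c u
        refine Submodule.linearMap_qext X ?_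
        ext w
        simp [Submodule.liftQ_apply, hγb, map_smul] } with hFdef
  have hF : ∀ u w : B, F u (Submodule.Quotient.mk w) = γ ↑u ↑w := by
    intro u w
    exact Submodule.liftQ_apply X (γb u) w
  have hkerF : X ≤ LinearMap.ker F := by
    refine le_trans (le_of_eq hXdef) (span_le.mpr ?_)
    intro b hb
    rw [Set.mem_singleton_iff] at hb
    subst hb
    show F xB = 0
    refine Submodule.linearMap_qext X ?_
    ext w
    simp only [LinearMap.comp_apply, Submodule.mkQ_apply, LinearMap.zero_comp,
      LinearMap.zero_apply]
    rw [hF xB w]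
    show γ x ↑w = 0
    exact w.2
  set γq : (B ⧸ X) →ₗ[ℝ] (B ⧸ X) →ₗ[ℝ] ℝ := X.liftQ F hkerF with hγqdef
  have hγq : ∀ u w : B, γq (Submodule.Quotient.mk u) (Submodule.Quotient.mk w) = γ ↑u ↑w := by
    intro u w
    have h1 : γq (Submodule.Quotient.mk u) = F u := Submodule.liftQ_apply X F u
    exact (LinearMap.congr_fun h1 (Submodule.Quotient.mk w)).trans (hF u w)
  -- hypotheses of the induction for the quotient
  have hsymm_q : ∀ u v : B ⧸ X, γq u v = γq v u := by
    intro u' v'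
    obtain ⟨u, rfl⟩ := Submodule.Quotient.mk_surjective X u'
    obtain ⟨w, rfl⟩ := Submodule.Quotient.mk_surjective X v'
    rw [hγq, hγq]
    exact hsymm _ _
  have hnd_q : ∀ u : B ⧸ X, (∀ v, γq u v = 0) → u = 0 := by
    intro u' hu'
    obtain ⟨u, rfl⟩ := Submodule.Quotient.mk_surjective X u'
    have hu2 : ∀ w : B, γ ↑u ↑w = 0 := by
      intro w
      rw [← hγq]
      exact hu' (Submodule.Quotient.mk w)
    have hw : (↑u : V) - (γ ↑u y) • x = 0 := by
      apply hnd
      intro w0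
      have hbw : w0 - (γ x w0) • y ∈ B := by
        show γ x _ = 0
        rw [map_sub, map_smul, smul_eq_mul, hxy]
        ring
      have h3 : γ (↑u : V) (w0 - (γ x w0) • y) = 0 := hu2 ⟨_, hbw⟩
      have hcalc : γ ((↑u : V) - (γ ↑u y) • x) w0 =
          γ (↑u : V) (w0 - (γ x w0) • y) + (γ x w0) * (γ (↑u : V) y)
            - (γ (↑u : V) y) * (γ x w0) := by
        simp only [map_sub, map_smul, LinearMap.sub_apply, LinearMap.smul_apply, smul_eq_mul]
        ring
      rw [hcalc, h3]
      ring
    have hu3 : u = (γ (↑u : V) y) • xB := by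
      apply Subtype.ext
      show (↑u : V) = (γ (↑u : V) y) • x
      exact sub_eq_zero.mp hw
    rw [Submodule.Quotient.mk_eq_zero, hu3, hXdef]
    exact Submodule.smul_mem _ _ (Submodule.mem_span_singleton_self xB)
  have hsa_q : ∀ i (u v : B ⧸ X), γq (Sq i u) v = γq u (Sq i v) := by
    intro i u' v'
    obtain ⟨u, rfl⟩ := Submodule.Quotient.mk_surjective X u'
    obtain ⟨w, rfl⟩ := Submodule.Quotient.mk_surjective X v'
    show γq (X.mapQ X (Sb i) (hXinv i) (Submodule.Quotient.mk u)) (Submodule.Quotient.mk w)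
        = γq (Submodule.Quotient.mk u) (X.mapQ X (Sb i) (hXinv i) (Submodule.Quotient.mk w))
    rw [Submodule.mapQ_apply, Submodule.mapQ_apply, hγq, hγq]
    exact hsa i ↑u ↑w
  have hnil_q : ∃ N, jcas Sq N = ⊤ := by
    obtain ⟨N, hN⟩ := hnil
    refine ⟨N, eq_top_iff.mpr ?_⟩
    intro u' _
    obtain ⟨u, rfl⟩ := Submodule.Quotient.mk_surjective X u'
    have h1 : (↑u : V) ∈ jcas S N := by rw [hN]; trivial
    have h2 : u ∈ jcas Sb N := jcas_restrict hBi N u h1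
    exact jcas_quot hXinv N u h2
  obtain ⟨fQ, m', hm', htriQ, hpairQ, hmidQ, hzeroQ, hsortQ⟩ :=
    prev Sq γq hdimQ hsymm_q hnd_q hsa_q hnil_q
  -- lifts
  have hexl : ∀ j : Fin (n-2), ∃ u : B, Submodule.Quotient.mk u = fQ j :=
    fun j => Submodule.Quotient.mk_surjective X (fQ j)
  choose l0 hl0 using hexl
  set l : Fin (n-2) → B := fun j => l0 j - (γ y ↑(l0 j)) • xB with hldef
  have hmkxB : (Submodule.Quotient.mk xB : B ⧸ X) = 0 := by
    rw [Submodule.Quotient.mk_eq_zero, hXdef]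
    exact Submodule.mem_span_singleton_self xB
  have hl : ∀ j, (Submodule.Quotient.mk (l j) : B ⧸ X) = fQ j := by
    intro j
    rw [hldef]
    simp only [Submodule.Quotient.mk_sub, Submodule.Quotient.mk_smul, hmkxB, smul_zero,
      sub_zero]
    exact hl0 j
  have hlc : ∀ j, (↑(l j) : V) = ↑(l0 j) - (γ y ↑(l0 j)) • x := by
    intro j
    rw [hldef]
    rfl
  have hγll : ∀ a b : Fin (n-2), γ ↑(l a) ↑(l b) = γq (fQ a) (fQ b) := by
    intro a b
    rw [← hγq, hl, hl]
  have hlely : ∀ j, γ y ↑(l j) = 0 := by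
    intro j
    rw [hlc j, map_sub, map_smul, smul_eq_mul, hyx]
    ring
  have hlex : ∀ j, γ x ↑(l j) = 0 := fun j => (l j).2
  -- the ℕ-indexed family
  set f : ℕ → V := fun j => if h : j < n - 2 then ↑(l ⟨j, h⟩) else 0 with hfdef
  have hfval : ∀ j (h : j < n - 2), f j = ↑(l ⟨j, h⟩) := by
    intro j h; rw [hfdef]; exact dif_pos h
  have hxf : ∀ j, j < n - 2 → γ x (f j) = 0 := by
    intro j h; rw [hfval j h]; exact hlex ⟨j, h⟩
  have hfx : ∀ j, j < n - 2 → γ (f j) x = 0 := by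
    intro j h; rw [hsymm]; exact hxf j h
  have hyf : ∀ j, j < n - 2 → γ y (f j) = 0 := by
    intro j h; rw [hfval j h]; exact hlely ⟨j, h⟩
  have hfy : ∀ j, j < n - 2 → γ (f j) y = 0 := by
    intro j h; rw [hsymm]; exact hyf j h
  -- span transfer from B
  have hBsub : ∀ u : B, u ∈ span ℝ (insert xB (Set.range l)) := by
    intro u
    apply mem_span_of_quot X _ (hXle _ (Set.mem_insert _ _))
    have h1 : X.mkQ u ∈ (⊤ : Submodule ℝ (B ⧸ X)) := trivial
    rw [← fQ.span_eq] at h1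
    refine span_mono ?_ h1
    rintro q ⟨j, rfl⟩
    exact ⟨l j, Set.mem_insert_of_mem _ ⟨j, rfl⟩, by rw [Submodule.mkQ_apply]; exact hl j⟩
  have hBsubV : ∀ u ∈ B, u ∈ span ℝ (insert x (f '' {j | j < n - 2})) := by
    intro u hu
    have h1 := hBsub ⟨u, hu⟩
    have h2 : u ∈ Submodule.map B.subtype (span ℝ (insert xB (Set.range l))) :=
      ⟨⟨u, hu⟩, h1, rfl⟩
    rw [Submodule.map_span] at h2
    refine span_mono ?_ h2
    rintro w ⟨b, hb, rfl⟩
    rcases Set.mem_insert_iff.mp hb with rfl | ⟨j, rfl⟩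
    · exact Set.mem_insert _ _
    · exact Set.mem_insert_of_mem _
        ⟨↑j, j.isLt, by rw [hfval ↑j j.isLt, Fin.eta]; rfl⟩
  have htriN : ∀ i k, k < n - 2 → S i (f k) ∈ span ℝ (insert x (f '' {j | j < k})) := by
    intro i k hk
    have hstep : Sb i (l ⟨k, hk⟩) ∈ span ℝ (insert xB (l '' {j : Fin (n-2) | (j : ℕ) < k})) := by
      apply mem_span_of_quot X _ (hXle _ (Set.mem_insert _ _))
      have h1 : X.mkQ (Sb i (l ⟨k, hk⟩)) = Sq i (fQ ⟨k, hk⟩) := by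
        rw [Submodule.mkQ_apply, ← hl ⟨k, hk⟩]
        exact (Submodule.mapQ_apply X X (Sb i) (l ⟨k, hk⟩)).symm
      rw [h1]
      refine span_mono ?_ (htriQ i ⟨k, hk⟩)
      rintro q ⟨j, hj, rfl⟩
      have hj' : (j : ℕ) < k := hj
      exact ⟨l j, Set.mem_insert_of_mem _ ⟨j, hj', rfl⟩,
        by rw [Submodule.mkQ_apply]; exact hl j⟩
    have h2 : (↑(Sb i (l ⟨k, hk⟩)) : V)
        ∈ Submodule.map B.subtype (span ℝ (insert xB (l '' {j : Fin (n-2) | (j : ℕ) < k}))) :=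
      Submodule.mem_map_of_mem hstep
    rw [Submodule.map_span] at h2
    rw [show S i (f k) = (↑(Sb i (l ⟨k, hk⟩)) : V) from by rw [hfval k hk]; rfl]
    refine span_mono ?_ h2
    rintro w ⟨b, hb, rfl⟩
    rcases Set.mem_insert_iff.mp hb with rfl | ⟨j, hj, rfl⟩
    · exact Set.mem_insert _ _
    · have hj' : (j : ℕ) < k := hj
      exact Set.mem_insert_of_mem _
        ⟨↑j, hj', by rw [hfval ↑j j.isLt, Fin.eta]; rfl⟩
  have hSyN : ∀ i, S i y ∈ span ℝ (insert x (f '' {j | j < n - 2})) := by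
    intro i
    apply hBsubV
    show γ x (S i y) = 0
    rw [← hsa i x y, hSx i, map_zero, LinearMap.zero_apply]
  -- the pattern
  have hpatf : Pat (n-2) m' (fun a b => γ (f a) (f b)) := by
    refine ⟨?_, ?_, ?_, ?_⟩
    · intro i j hi hij
      have hi' : i < n - 2 := by omega
      have hj' : j < n - 2 := by omega
      show γ (f i) (f j) = 1 ∧ γ (f i) (f i) = 0 ∧ γ (f j) (f j) = 0
      rw [hfval i hi', hfval j hj', hγll, hγll, hγll]
      exact hpairQ ⟨i, hi'⟩ ⟨j, hj'⟩ hi hij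
    · intro i hi him
      have hi' : i < n - 2 := by omega
      show γ (f i) (f i) = 1 ∨ γ (f i) (f i) = -1
      rw [hfval i hi', hγll]
      exact hmidQ ⟨i, hi'⟩ hi him
    · intro i j hi' hj' hexc1 hexc2
      show γ (f i) (f j) = 0
      rw [hfval i hi', hfval j hj', hγll]
      refine hzeroQ ⟨i, hi'⟩ ⟨j, hj'⟩ hexc1 ?_
      rintro ⟨hv, h1, h2⟩
      exact hexc2 ⟨by simpa using congrArg Fin.val hv, h1, h2⟩
    · intro i j hi hij hjm
      have hi' : i < n - 2 := by omega
      have hj' : j < n - 2 := by omega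
      show γ (f i) (f i) ≥ γ (f j) (f j)
      rw [hfval i hi', hfval j hj', hγll, hγll]
      exact hsortQ ⟨i, hi'⟩ ⟨j, hj'⟩ hi hij hjm
  -- spanning
  have hinsTop : ⊤ ≤ span ℝ (insert x (insert y (f '' {j | j < n - 2}))) := by
    intro w0 _
    have hbw : w0 - (γ x w0) • y ∈ B := by
      show γ x _ = 0
      rw [map_sub, map_smul, smul_eq_mul, hxy]
      ring
    have h1 := hBsubV _ hbw
    have h2 : w0 - (γ x w0) • y ∈ span ℝ (insert x (insert y (f '' {j | j < n - 2}))) :=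
      span_mono (Set.insert_subset_insert (Set.subset_insert _ _)) h1
    have hy' : y ∈ span ℝ (insert x (insert y (f '' {j | j < n - 2}))) :=
      subset_span (Set.mem_insert_of_mem _ (Set.mem_insert _ _))
    have hfin := Submodule.add_mem _ h2 (Submodule.smul_mem _ (γ x w0) hy')
    simpa using hfin
  obtain ⟨eN, hrange, htriN', hpatN'⟩ :=
    caseB S γ n m' hn2 hm' x y f hxx hxy hyx hyy hxf hfx hyf hfy hSx hSyN htriN hpatf
  exact assemble S γ n (m' + 1) hdim eN (le_trans hinsTop (span_mono hrange)) htriN'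
    (by omega) hpatN'

end
theorem master : ∀ n : ℕ, MasterStmt.{u, v} n := by
  intro n
  induction n using Nat.strong_induction_on with
  | _ n IH =>
  intro V _ _ _ ι S γ hdim hsymm hnd hsa hnil
  rcases Nat.eq_zero_or_pos n with rfl | hn
  · haveI hsub : Subsingleton V := finrank_zero_iff.mp hdim
    exact ⟨Basis.empty V, 0, by omega, fun i k => k.elim0, fun i => i.elim0,
      fun i => i.elim0, fun i => i.elim0, fun i => i.elim0⟩
  · have hVne : ∃ v : V, v ≠ 0 := by
      have : Nontrivial V := by
        apply Module.nontrivial_of_finrank_pos (R := ℝ) (M := V)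
        omega
      exact exists_ne 0
    obtain ⟨x₀, hx₀, hSx₀⟩ := exists_ann hnil hVne
    by_cases hani : ∃ x : V, x ≠ 0 ∧ (∀ i, S i x = 0) ∧ γ x x ≠ 0
    · obtain ⟨x, hx, hSx, hc⟩ := hani
      exact driverA S γ n hn (IH (n-1) (by omega)) hdim hsymm hnd hsa hnil x hx hSx hc
    · have hxx : γ x₀ x₀ = 0 := by
        by_contra h3
        exact hani ⟨x₀, hx₀, hSx₀, h3⟩
      exact driverB S γ n hn (IH (n-2) (by omega)) hdim hsymm hnd hsa hnil x₀ hx₀ hSx₀ hxx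


/-- every nilpotent metrised real Jordan algebra `(J,γ)` of dimension `n`
admits a basis `e₁,…,e_n` putting it in semi-canonical form, where in addition the partition
can be chosen to be `{{1,n},…,{m,n+1-m},{m+1},…,{n-m}}` (for some `m` with `2m ≤ n`); i.e.
(in 0-indexed form) `γ(e_i,e_j) = 1` for the antidiagonal pairs `i+j+1 = n` with `i < m` or
`j < m`, `γ(e_i,e_i) = ±1` for the middle indices `m ≤ i < n-m`, all other entries vanish,
and moreover `γ(e_i,e_i) ≥ γ(e_j,e_j)` for middle indices `i < j`. -/
theorem stmt_10 {J : Type*} [AddCommGroup J] [Module ℝ J] [FiniteDimensional ℝ J] (n : ℕ)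
    (hdim : finrank ℝ J = n)
    (mul : J →ₗ[ℝ] J →ₗ[ℝ] J)
    (hcomm : ∀ u v, mul u v = mul v u)
    (hjordan : ∀ u v, mul u (mul (mul u u) v) = mul (mul u u) (mul u v))
    (γ : J →ₗ[ℝ] J →ₗ[ℝ] ℝ)
    (hsymm : ∀ u v, γ u v = γ v u)
    (hnd : ∀ u, (∀ v, γ u v = 0) → u = 0)
    (htrace : ∀ u v w, γ (mul u v) w = γ u (mul v w))
    (hnilp : ∃ m, cas mul m = ⊤) :
    ∃ (e : Basis (Fin n) ℝ J) (m : ℕ), 2 * m ≤ n ∧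
      -- semi-canonical form, property (i)
      (∀ k, 1 ≤ k → k ≤ n →
        ∀ x ∈ Submodule.span ℝ (⇑e '' {i : Fin n | (i : ℕ) < k}),
          ∀ y, mul x y ∈ Submodule.span ℝ (⇑e '' {i : Fin n | (i : ℕ) < k - 1})) ∧
      -- the pairs {k, n+1-k}, k ≤ m (0-indexed: {i, n-1-i}, i < m)
      (∀ i j : Fin n, (i : ℕ) < m → (i : ℕ) + (j : ℕ) + 1 = n →
        γ (e i) (e j) = 1 ∧ γ (e i) (e i) = 0 ∧ γ (e j) (e j) = 0) ∧
      -- the singletons (middle indices)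
      (∀ i : Fin n, m ≤ (i : ℕ) → (i : ℕ) + m < n →
        γ (e i) (e i) = 1 ∨ γ (e i) (e i) = -1) ∧
      -- all other entries of γ vanish
      (∀ i j : Fin n,
        ¬((i : ℕ) + (j : ℕ) + 1 = n ∧ ((i : ℕ) < m ∨ (j : ℕ) < m)) →
        ¬(i = j ∧ m ≤ (i : ℕ) ∧ (i : ℕ) + m < n) →
        γ (e i) (e j) = 0) ∧
      -- ordering of the diagonal entries
      (∀ i j : Fin n, m ≤ (i : ℕ) → (i : ℕ) < (j : ℕ) → (j : ℕ) + m < n →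
        γ (e i) (e i) ≥ γ (e j) (e j)) := by

  have hcas : ∀ k, cas mul k = jcas (fun y : J => mul y) k := by
    intro k
    induction k with
    | zero => rfl
    | succ k ih =>
      ext u
      constructor
      · intro hu i
        have hu' : ∀ y, mul u y ∈ cas mul k := hu
        rw [hcomm i u, ← ih]
        exact hu' i
      · intro hu
        intro y
        have := hu y
        rw [hcomm y u, ← ih] at this
        exact this
  have hsa' : ∀ (y : J) (u v : J), γ ((fun y : J => mul y) y u) v = γ u ((fun y : J => mul y) y v) := by
    intro y u v
    show γ (mul y u) v = γ u (mul y v)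
    rw [hcomm y u]
    exact htrace u y v
  have hnil' : ∃ N, jcas (fun y : J => mul y) N = ⊤ := by
    obtain ⟨N, hN⟩ := hnilp
    exact ⟨N, by rw [← hcas]; exact hN⟩
  obtain ⟨e, m, hm, htri, hpair, hmid, hzero, hsort⟩ :=
    master n (fun y : J => mul y) γ hdim hsymm hnd hsa' hnil'
  refine ⟨e, m, hm, ?_, hpair, hmid, hzero, hsort⟩
  intro k hk1 hkn x hx y
  rw [hcomm x y]
  have hmap : mul y x ∈ Submodule.map (mul y) (span ℝ (⇑e '' {i : Fin n | (i : ℕ) < k})) :=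
    Submodule.mem_map_of_mem hx
  rw [Submodule.map_span] at hmap
  refine span_le.mpr ?_ hmap
  rintro w ⟨v, ⟨i, hi, rfl⟩, rfl⟩
  have hi' : (i : ℕ) < k := hi
  have h2 := htri y i
  refine span_mono (Set.image_mono ?_) h2
  intro j hj
  have hj' : (j : ℕ) < (i : ℕ) := hj
  show (j : ℕ) < k - 1
  omega
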